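/- Let f(n) be the number of Dyck paths of semilength n having no peak at height 1 (equivalently, Dyck paths with mex 1, i.e., Dyck paths with no hills). Then in ℤ⟦X⟧ one has (1 + X − X·C(X)) · Σ_{n≥0} f(n) X^n = 1; that is, the generating function of Dyck paths with mex 1 is 1/(1 + x − xC(x)), the generating function of the Fine numbers. -/

import Mathlib

open DyckStep

/-- A Dyck word `p` has a peak at height `h`: an up-step immediately followed by a
down-step, such that the prefix ending with that up-step has `h` more `U`s than `D`s. -/
def DyckWord.HasPeakAtHeight (p : DyckWord) (h : ℕ) : Prop :=
  ∃ i, i + 1 < p.toList.length ∧ p.toList.getD i D = U ∧ p.toList.getD (i + 1) U = D ∧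
    (p.toList.take (i + 1)).count U = (p.toList.take (i + 1)).count D + h

/-- The generating function of the Catalan numbers, `C(X) = Σ_{n≥0} catalan(n) Xⁿ`. -/
noncomputable def catalanGF : PowerSeries ℤ :=
  PowerSeries.mk fun n => (catalan n : ℤ)

namespace DyckWord

open List

instance (p : DyckWord) (h : ℕ) : Decidable (p.HasPeakAtHeight h) :=
  decidable_of_iff (∃ i < p.toList.length, i + 1 < p.toList.length ∧
      p.toList.getD i D = U ∧ p.toList.getD (i + 1) U = D ∧
      (p.toList.take (i + 1)).count U = (p.toList.take (i + 1)).count D + h)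
    ⟨fun ⟨i, _, hi⟩ => ⟨i, hi⟩, fun ⟨i, hi⟩ => ⟨i, by omega, hi⟩⟩

lemma semilength_eq_zero {p : DyckWord} : p.semilength = 0 ↔ p = 0 := by
  constructor
  · intro h
    have h2 := p.two_mul_semilength_eq_length
    rw [h, mul_zero] at h2
    exact toList_eq_nil.mp (List.length_eq_zero_iff.mp h2.symm)
  · rintro rfl; rfl

lemma not_hasPeak_zero (h : ℕ) : ¬ (0 : DyckWord).HasPeakAtHeight h := by
  rintro ⟨i, hi, -⟩
  simp [show (0 : DyckWord).toList = [] from rfl] at hi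

lemma toList_nest_add (q r : DyckWord) :
    (q.nest + r).toList = (U :: (q.toList ++ [D])) ++ r.toList := by
  show (([U] ++ q.toList ++ [D]) ++ r.toList) = _
  simp

/-- In a Dyck word, a balanced prefix cannot end with `U`. -/
lemma getD_of_balanced_prefix (q : DyckWord) {i : ℕ} (h1 : 1 ≤ i) (h2 : i ≤ q.toList.length)
    (hc : (q.toList.take i).count U = (q.toList.take i).count D) :
    q.toList.getD (i - 1) D = D := by
  have hlw : (q.toList.take i).length = i := by rw [List.length_take]; omega
  have hne : q.toList.take i ≠ [] := by
    intro h; rw [h] at hlw; simp at hlw; omega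
  have hw : (q.toList.take i).getLast hne = D := (q.take i hc).getLast_eq_D hne
  rw [List.getLast_eq_getElem] at hw
  simp only [hlw] at hw
  rw [List.getElem_take] at hw
  rw [List.getD_eq_getElem _ _ (by omega)]
  exact hw

lemma head_U_of_ne {q : DyckWord} {a : DyckStep} {t : List DyckStep}
    (hat : q.toList = a :: t) : a = U := by
  have := q.count_D_le_count_U 1
  rw [hat] at this
  cases a
  · rfl
  · simp at this

/-- Key decomposition lemma: `q.nest + r` has a peak at height 1 iff `q = 0` or
`r` has a peak at height 1. -/
lemma hasPeak1_iff (q r : DyckWord) :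
    (q.nest + r).HasPeakAtHeight 1 ↔ q = 0 ∨ r.HasPeakAtHeight 1 := by
  obtain ⟨l, hbal, hpre⟩ := q
  obtain ⟨s, sbal, spre⟩ := r
  simp only [HasPeakAtHeight, toList_nest_add]
  have hAlen : (U :: (l ++ [D])).length = l.length + 2 := by simp
  constructor
  · rintro ⟨i, hlen, hU, hD, hcnt⟩
    simp only [List.length_append, hAlen] at hlen
    rcases Nat.lt_or_ge i 1 with h0 | h1
    · -- i = 0
      left
      have hi : i = 0 := by omega
      subst hi
      by_contra hq
      obtain ⟨a, t, hat⟩ : ∃ a t, l = a :: t := by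
        cases hc : l with
        | nil => exact absurd (DyckWord.ext hc : (⟨l, hbal, hpre⟩ : DyckWord) = 0) hq
        | cons a t => exact ⟨a, t, rfl⟩
      have ha : a = U := head_U_of_ne (q := ⟨l, hbal, hpre⟩) hat
      rw [hat, ha] at hD
      simp at hD
    · rcases Nat.lt_or_ge i (l.length + 1) with h2 | h3
      · -- 1 ≤ i ≤ l.length : impossible
        exfalso
        have ht1 : i + 1 ≤ (U :: (l ++ [D])).length := by rw [hAlen]; omega
        rw [List.take_append_of_le_length ht1,
          List.take_succ_cons, List.take_append_of_le_length (show i ≤ l.length by omega)] at hcnt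
        simp only [List.count_cons, beq_self_eq_true, if_true,
          beq_iff_eq, reduceCtorEq, if_false, add_zero] at hcnt
        have hcnt' : (l.take i).count U = (l.take i).count D := by omega
        have hend : l.getD (i - 1) D = D :=
          getD_of_balanced_prefix ⟨l, hbal, hpre⟩ h1 (show i ≤ l.length by omega) hcnt'
        have hiA : i < (U :: (l ++ [D])).length := by rw [hAlen]; omega
        rw [List.getD_append _ _ _ _ hiA,
          show i = (i - 1) + 1 by omega, List.getD_cons_succ,
          List.getD_append _ _ _ _ (show i - 1 < l.length by omega)] at hU
        rw [hU] at hend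
        simp at hend
      · rcases Nat.lt_or_ge i (l.length + 2) with h4 | h5
        · -- i = l.length + 1
          exfalso
          have hi : i = l.length + 1 := by omega
          subst hi
          have hiA : l.length + 1 < (U :: (l ++ [D])).length := by rw [hAlen]; omega
          rw [List.getD_append _ _ _ _ hiA, List.getD_cons_succ,
            List.getD_append_right _ _ _ _ (le_refl _), Nat.sub_self] at hU
          simp at hU
        · right
          have hge1 : (U :: (l ++ [D])).length ≤ i := by rw [hAlen]; omega
          have hge2 : (U :: (l ++ [D])).length ≤ i + 1 := by rw [hAlen]; omega
          refine ⟨i - (l.length + 2), by omega, ?_, ?_, ?_⟩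
          · rw [List.getD_append_right _ _ _ _ hge1, hAlen] at hU
            exact hU
          · rw [List.getD_append_right _ _ _ _ hge2, hAlen,
              show i + 1 - (l.length + 2) = i - (l.length + 2) + 1 by omega] at hD
            exact hD
          · rw [List.take_append, List.take_of_length_le hge2,
              List.count_append, List.count_append, hAlen,
              show i + 1 - (l.length + 2) = i - (l.length + 2) + 1 by omega] at hcnt
            simp only [List.count_cons, List.count_append, beq_self_eq_true, if_true,
              beq_iff_eq, reduceCtorEq, if_false, add_zero, List.count_singleton,
              List.count_nil] at hcnt
            omega
  · rintro (hq | ⟨j, hlen, hU, hD, hcnt⟩)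
    · have hl : l = [] := congrArg DyckWord.toList hq
      subst hl
      exact ⟨0, by simp, by simp, by simp, by simp⟩
    · have hge1 : (U :: (l ++ [D])).length ≤ l.length + 2 + j := by rw [hAlen]; omega
      have hge2 : (U :: (l ++ [D])).length ≤ l.length + 2 + j + 1 := by rw [hAlen]; omega
      refine ⟨l.length + 2 + j, ?_, ?_, ?_, ?_⟩
      · simp only [List.length_append, hAlen]; omega
      · rw [List.getD_append_right _ _ _ _ hge1, hAlen,
          show l.length + 2 + j - (l.length + 2) = j by omega]
        exact hU
      · rw [List.getD_append_right _ _ _ _ hge2, hAlen,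
          show l.length + 2 + j + 1 - (l.length + 2) = j + 1 by omega]
        exact hD
      · rw [List.take_append, List.take_of_length_le hge2,
          List.count_append, List.count_append, hAlen,
          show l.length + 2 + j + 1 - (l.length + 2) = j + 1 by omega]
        simp only [List.count_cons, List.count_append, beq_self_eq_true, if_true,
          beq_iff_eq, reduceCtorEq, if_false, add_zero, List.count_singleton,
          List.count_nil]
        omega

/-- Equivalence giving the Fine-number recurrence. -/
def peakEquiv (n : ℕ) :
    {p : DyckWord // p.semilength = n + 1 ∧ ¬ p.HasPeakAtHeight 1} ≃
    {x : DyckWord × DyckWord //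
      x.1.semilength + x.2.semilength = n ∧ x.1 ≠ 0 ∧ ¬ x.2.HasPeakAtHeight 1} where
  toFun x :=
    ⟨(x.1.insidePart, x.1.outsidePart), by
      have hp : x.1 ≠ 0 := fun h => by have := x.2.1; rw [h] at this; simp at this
      refine ⟨?_, ?_, ?_⟩
      · show x.1.insidePart.semilength + x.1.outsidePart.semilength = n
        have := semilength_insidePart_add_semilength_outsidePart_add_one hp
        have := x.2.1
        omega
      · show x.1.insidePart ≠ 0
        have hiff := hasPeak1_iff x.1.insidePart x.1.outsidePart
        rw [nest_insidePart_add_outsidePart hp] at hiff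
        exact fun h => x.2.2 (hiff.mpr (Or.inl h))
      · show ¬ x.1.outsidePart.HasPeakAtHeight 1
        have hiff := hasPeak1_iff x.1.insidePart x.1.outsidePart
        rw [nest_insidePart_add_outsidePart hp] at hiff
        exact fun h => x.2.2 (hiff.mpr (Or.inr h))⟩
  invFun y :=
    ⟨y.1.1.nest + y.1.2, by
      rw [semilength_add, semilength_nest]
      have := y.2.1
      omega, by
      rw [hasPeak1_iff]
      push_neg
      exact ⟨y.2.2.1, y.2.2.2⟩⟩
  left_inv x := by
    apply Subtype.ext
    show x.1.insidePart.nest + x.1.outsidePart = x.1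
    exact nest_insidePart_add_outsidePart (fun h => by have := x.2.1; rw [h] at this; simp at this)
  right_inv y := by
    apply Subtype.ext
    apply Prod.ext
    · show (y.1.1.nest + y.1.2).insidePart = y.1.1
      rw [insidePart_add nest_ne_zero, insidePart_nest]
    · show (y.1.1.nest + y.1.2).outsidePart = y.1.2
      rw [outsidePart_add nest_ne_zero, outsidePart_nest, zero_add]

instance fintypePeak (n : ℕ) :
    Fintype {p : DyckWord // p.semilength = n ∧ ¬ p.HasPeakAtHeight 1} :=
  Fintype.ofEquiv {x : {p : DyckWord // p.semilength = n} // ¬ x.1.HasPeakAtHeight 1}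
    (Equiv.subtypeSubtypeEquivSubtypeInter (fun p : DyckWord => p.semilength = n)
      (fun p => ¬ p.HasPeakAtHeight 1))

instance fintypeNe (n : ℕ) :
    Fintype {q : DyckWord // q.semilength = n ∧ q ≠ 0} :=
  Fintype.ofEquiv {x : {p : DyckWord // p.semilength = n} // x.1 ≠ 0}
    (Equiv.subtypeSubtypeEquivSubtypeInter (fun p : DyckWord => p.semilength = n)
      (fun p => p ≠ 0))

/-- The Fine numbers. -/
noncomputable def fine (n : ℕ) : ℕ := Nat.card {p : DyckWord // p.semilength = n ∧ ¬ p.HasPeakAtHeight 1}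

/-- Nonzero Dyck words of given semilength. -/
noncomputable def nzc (n : ℕ) : ℕ := Nat.card {q : DyckWord // q.semilength = n ∧ q ≠ 0}

lemma fine_zero : fine 0 = 1 := by
  rw [fine]
  have : Unique {p : DyckWord // p.semilength = 0 ∧ ¬ p.HasPeakAtHeight 1} :=
    { default := ⟨0, rfl, not_hasPeak_zero 1⟩
      uniq := fun x => Subtype.ext (semilength_eq_zero.mp x.2.1) }
  exact Nat.card_unique

lemma nzc_zero : nzc 0 = 0 := by
  rw [nzc]
  have : IsEmpty {q : DyckWord // q.semilength = 0 ∧ q ≠ 0} :=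
    ⟨fun x => x.2.2 (semilength_eq_zero.mp x.2.1)⟩
  exact Nat.card_of_isEmpty

lemma nzc_pos (n : ℕ) (hn : n ≠ 0) : nzc n = catalan n := by
  rw [nzc, Nat.card_congr (Equiv.subtypeEquivRight (q := fun q => q.semilength = n)
    (fun q => ⟨fun h => h.1, fun h => ⟨h, fun h0 => hn (by rw [← h, h0]; rfl)⟩⟩)),
    Nat.card_eq_fintype_card, card_dyckWord_semilength_eq_catalan]

/-- Decompose by semilength of the two parts. -/
def sigmaEquiv (n : ℕ) :
    {x : DyckWord × DyckWord //
      x.1.semilength + x.2.semilength = n ∧ x.1 ≠ 0 ∧ ¬ x.2.HasPeakAtHeight 1} ≃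
    Σ k : (Finset.HasAntidiagonal.antidiagonal n : Finset (ℕ × ℕ)),
      ({q : DyckWord // q.semilength = (k : ℕ × ℕ).1 ∧ q ≠ 0} ×
       {r : DyckWord // r.semilength = (k : ℕ × ℕ).2 ∧ ¬ r.HasPeakAtHeight 1}) where
  toFun x := ⟨⟨(x.1.1.semilength, x.1.2.semilength), Finset.HasAntidiagonal.mem_antidiagonal.mpr x.2.1⟩,
    ⟨x.1.1, rfl, x.2.2.1⟩, ⟨x.1.2, rfl, x.2.2.2⟩⟩
  invFun y := ⟨(y.2.1.1, y.2.2.1), by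
    have hm := Finset.HasAntidiagonal.mem_antidiagonal.mp y.1.2
    rw [y.2.1.2.1, y.2.2.2.1]
    exact hm, y.2.1.2.2, y.2.2.2.2⟩
  left_inv x := rfl
  right_inv := fun ⟨⟨⟨k, j⟩, hkj⟩, ⟨q, hq1, hq2⟩, ⟨r, hr1, hr2⟩⟩ => by
    dsimp only at hq1 hr1
    subst hq1 hr1
    rfl

lemma fine_succ (n : ℕ) :
    fine (n + 1) = ∑ x ∈ Finset.HasAntidiagonal.antidiagonal n, nzc x.1 * fine x.2 := by
  rw [fine, Nat.card_congr ((peakEquiv n).trans (sigmaEquiv n)),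
    Nat.card_eq_fintype_card, Fintype.card_sigma]
  rw [← Finset.sum_coe_sort (Finset.HasAntidiagonal.antidiagonal n)
    (fun x => nzc x.1 * fine x.2)]
  congr 1
  ext k
  rw [Fintype.card_prod, nzc, fine, Nat.card_eq_fintype_card, Nat.card_eq_fintype_card]

lemma key (n : ℕ) :
    (fine (n + 1) : ℤ) + fine n =
      ∑ x ∈ Finset.HasAntidiagonal.antidiagonal n, (catalan x.1 : ℤ) * fine x.2 := by
  have h1 : (fine (n + 1) : ℤ) = ∑ x ∈ Finset.HasAntidiagonal.antidiagonal n, (nzc x.1 : ℤ) * fine x.2 := by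
    rw [fine_succ]; push_cast; rfl
  have h2 : ∑ x ∈ Finset.HasAntidiagonal.antidiagonal n,
      ((catalan x.1 : ℤ) * fine x.2 - (nzc x.1 : ℤ) * fine x.2) = fine n := by
    rw [Finset.sum_eq_single (0, n)]
    · rw [nzc_zero, catalan_zero]; push_cast; ring
    · rintro ⟨a, b⟩ hab hne
      have ha : a ≠ 0 := by
        rintro rfl
        exact hne (by
          rw [Prod.mk.injEq]
          exact ⟨rfl, by simpa using Finset.HasAntidiagonal.mem_antidiagonal.mp hab⟩)
      rw [nzc_pos a ha]; ring
    · intro h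
      exact absurd (Finset.HasAntidiagonal.mem_antidiagonal.mpr (by simp)) h
  rw [Finset.sum_sub_distrib] at h2
  linarith [h2]

end DyckWord

/-- if `f n` is the number of Dyck paths of semilength `n` with no peak at
height 1 (no hills, i.e. mex 1), then `(1 + X − X·C(X)) · Σ f(n) Xⁿ = 1` in `ℤ⟦X⟧`. -/
theorem stmt_15 :
    (1 + (PowerSeries.X : PowerSeries ℤ) - PowerSeries.X * catalanGF) *
        PowerSeries.mk
          (fun n =>
            (Nat.card {p : DyckWord // p.semilength = n ∧ ¬ p.HasPeakAtHeight 1} : ℤ)) =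
      1 := by
  have hFeq : PowerSeries.mk
      (fun n => (Nat.card {p : DyckWord // p.semilength = n ∧ ¬ p.HasPeakAtHeight 1} : ℤ)) =
      PowerSeries.mk (fun n => ((DyckWord.fine n : ℤ))) := rfl
  rw [hFeq]
  set F : PowerSeries ℤ := PowerSeries.mk fun n => ((DyckWord.fine n : ℤ)) with hF
  have expand : (1 + (PowerSeries.X : PowerSeries ℤ) - PowerSeries.X * catalanGF) * F =
      F + PowerSeries.X * F - PowerSeries.X * (catalanGF * F) := by ring
  rw [expand]
  ext n
  cases n with
  | zero =>
    simp [hF, DyckWord.fine_zero]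
  | succ n =>
    rw [map_sub, map_add, PowerSeries.coeff_succ_X_mul, PowerSeries.coeff_succ_X_mul,
      PowerSeries.coeff_mul]
    simp only [hF, catalanGF, PowerSeries.coeff_mk]
    have hkey := DyckWord.key n
    rw [PowerSeries.coeff_one]
    simp only [Nat.succ_ne_zero, if_false]
    linarith [hkey]
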